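/- Let M and N be matroids of rank 2 on [n] = {1, …, n}. If the symmetrized indicator functions of their base polytopes are equal, i.e., 𝟙(P(M)) = 𝟙(P(N)) as functions ℝ^n → ℝ, then M and N are isomorphic. -/

import Mathlib

namespace PaperPOAM

variable {α : Type*}

/-- A circuit of a matroid: a minimal dependent set. -/
def IsCircuit (M : Matroid α) (C : Set α) : Prop :=
  M.Dep C ∧ ∀ D, D ⊂ C → ¬ M.Dep D

/-- A loop of a matroid: an element whose singleton is dependent. -/
def IsLoop (M : Matroid α) (e : α) : Prop := M.Dep {e}

/-- The set of loops of a matroid. -/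
def loops (M : Matroid α) : Set α := {e | IsLoop M e}

/-- A coloop: an element of the ground set contained in every base. -/
def IsColoop (M : Matroid α) (e : α) : Prop := e ∈ M.E ∧ ∀ B, M.IsBase B → e ∈ B

/-- A cyclic flat: a flat that is a union of circuits, i.e. a flat each of whose
elements lies in a circuit contained in the flat. -/
def IsCyclicFlat (M : Matroid α) (F : Set α) : Prop :=
  M.IsFlat F ∧ ∀ e ∈ F, ∃ C, IsCircuit M C ∧ C ⊆ F ∧ e ∈ C

/-- The rank of a set in a matroid: the largest size of an independent subset. -/
noncomputable def rkOf (M : Matroid α) (X : Set α) : ℕ :=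
  sSup {n | ∃ I, M.Indep I ∧ I ⊆ X ∧ I.ncard = n}

/-- The matroid has rank `r`: every base has `r` elements. -/
def RankEq (M : Matroid α) (r : ℕ) : Prop := ∀ B, M.IsBase B → B.ncard = r

/-- Two matroids are isomorphic: there is a bijection between the ground sets carrying
the bases of one exactly onto the bases of the other. -/
def MatroidIso (M N : Matroid α) : Prop :=
  ∃ f : α → α, Set.BijOn f M.E N.E ∧ ∀ B, B ⊆ M.E → (M.IsBase B ↔ N.IsBase (f '' B))

/-- `M` is the rank-2 Schubert matroid `S(a,b)` on `{1,…,n}`: its bases are exactly the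
two-element subsets `{i,j}` of `{1,…,n}` with `i < j`, `a ≤ i`, `b ≤ j`. -/
def IsSchubert2 (n a b : ℕ) (M : Matroid ℕ) : Prop :=
  M.E = Set.Icc 1 n ∧
  ∀ B, M.IsBase B ↔ ∃ i j, i < j ∧ a ≤ i ∧ b ≤ j ∧ 1 ≤ i ∧ j ≤ n ∧ B = ({i, j} : Set ℕ)

/-- `M` is the rank-3 Schubert matroid `S(a,b,c)` on `{1,…,n}`: its bases are exactly the
three-element subsets `{i,j,k}` of `{1,…,n}` with `i < j < k`, `a ≤ i`, `b ≤ j`, `c ≤ k`. -/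
def IsSchubert3 (n a b c : ℕ) (M : Matroid ℕ) : Prop :=
  M.E = Set.Icc 1 n ∧
  ∀ B, M.IsBase B ↔ ∃ i j k, i < j ∧ j < k ∧ a ≤ i ∧ b ≤ j ∧ c ≤ k ∧ 1 ≤ i ∧ k ≤ n ∧
    B = ({i, j, k} : Set ℕ)

end PaperPOAM

namespace PaperPOAM

open scoped Classical in
/-- The 0/1 indicator vector in `ℝ^n` of a subset `B ⊆ {1,…,n}`
(coordinate `j : Fin n` corresponds to the element `j+1`). -/
noncomputable def indVec (n : ℕ) (B : Set ℕ) : Fin n → ℝ :=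
  fun j => if ((j : ℕ) + 1) ∈ B then 1 else 0

/-- The base polytope of a matroid on `{1,…,n}`: the convex hull in `ℝ^n` of the
indicator vectors of its bases. -/
noncomputable def basePolytope (n : ℕ) (M : Matroid ℕ) : Set (Fin n → ℝ) :=
  convexHull ℝ {x | ∃ B, M.IsBase B ∧ x = indVec n B}

/-- The symmetrized indicator function of a subset `X ⊆ ℝ^n`:
`𝟙(X)(x) = (1/n!) ∑ over permutations σ of the coordinates of the 0/1 indicator of X at σ·x`. -/
noncomputable def symInd (n : ℕ) (X : Set (Fin n → ℝ)) : (Fin n → ℝ) → ℝ :=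
  fun x => (1 / (n.factorial : ℝ)) *
    ∑ σ : Equiv.Perm (Fin n), Set.indicator X 1 (fun i => x (σ i))

end PaperPOAM

namespace PaperPOAM

open scoped Classical

noncomputable section S10

/-- Finset of nonloops. -/
noncomputable def NLf (n : ℕ) (M : Matroid ℕ) : Finset ℕ :=
  (Finset.Icc 1 n).filter (fun a => M.Indep {a})

/-- Parallel-or-equal relation. -/
def Par (M : Matroid ℕ) (a b : ℕ) : Prop := M.Dep {a, b} ∨ a = b

/-- Parallel class of `a`. -/
noncomputable def Clf (n : ℕ) (M : Matroid ℕ) (a : ℕ) : Finset ℕ :=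
  (NLf n M).filter (fun b => Par M a b)

/-- Nonloops not parallel to `a`. -/
noncomputable def Tf (n : ℕ) (M : Matroid ℕ) (a : ℕ) : Finset ℕ :=
  (NLf n M).filter (fun b => ¬ Par M a b)

variable {n : ℕ} {M : Matroid ℕ}

theorem mem_NLf {a : ℕ} : a ∈ NLf n M ↔ (1 ≤ a ∧ a ≤ n) ∧ M.Indep {a} := by
  simp [NLf, Finset.mem_Icc]

theorem NLf_subset_Icc : NLf n M ⊆ Finset.Icc 1 n := Finset.filter_subset _ _

theorem Par_refl (a : ℕ) : Par M a a := Or.inr rfl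

theorem Par_symm {a b : ℕ} (h : Par M a b) : Par M b a := by
  rcases h with h | h
  · exact Or.inl (by rwa [Set.pair_comm])
  · exact Or.inr h.symm

theorem pair_finite {a b : ℕ} : ({a, b} : Set ℕ).Finite := by
  exact (Set.finite_singleton b).insert a

/-- An independent set of size two is a base (rank 2). -/
theorem indep_pair_base (hMrk : RankEq M 2) {a b : ℕ} (hab : a ≠ b)
    (h : M.Indep {a, b}) : M.IsBase ({a, b} : Set ℕ) := by
  obtain ⟨B, hB, hsub⟩ := h.exists_isBase_superset
  have hcard := hMrk B hB
  have hfin : B.Finite := by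
    by_contra hinf
    rw [Set.Infinite.ncard hinf] at hcard
    omega
  have : ({a, b} : Set ℕ) = B := by
    apply Set.eq_of_subset_of_ncard_le hsub _ hfin
    rw [hcard, Set.ncard_pair hab]
  rwa [this]

theorem base_iff_pair (hME : M.E = Set.Icc 1 n) (hMrk : RankEq M 2) {B : Set ℕ} :
    M.IsBase B ↔ ∃ a b, a ∈ NLf n M ∧ b ∈ Tf n M a ∧ B = ({a, b} : Set ℕ) := by
  constructor
  · intro hB
    have hcard := hMrk B hB
    obtain ⟨a, b, hab, rfl⟩ := Set.ncard_eq_two.mp hcard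
    have hsubE : ({a, b} : Set ℕ) ⊆ M.E := hB.subset_ground
    have ha : a ∈ Set.Icc 1 n := hME ▸ hsubE (by simp)
    have hb : b ∈ Set.Icc 1 n := hME ▸ hsubE (by simp)
    have hindep := hB.indep
    have hia : M.Indep {a} := hindep.subset (by simp)
    have hib : M.Indep {b} := hindep.subset (by simp [Set.subset_insert])
    have haN : a ∈ NLf n M := mem_NLf.mpr ⟨Set.mem_Icc.mp ha, hia⟩
    have hbN : b ∈ NLf n M := mem_NLf.mpr ⟨Set.mem_Icc.mp hb, hib⟩
    refine ⟨a, b, haN, ?_, rfl⟩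
    simp only [Tf, Finset.mem_filter]
    exact ⟨hbN, fun hp => by rcases hp with hp | hp; exact hindep.not_dep hp; exact hab hp⟩
  · rintro ⟨a, b, haN, hbT, rfl⟩
    simp only [Tf, Finset.mem_filter] at hbT
    obtain ⟨hbN, hnp⟩ := hbT
    have hab : a ≠ b := fun h => hnp (Or.inr h)
    have hsubE : ({a, b} : Set ℕ) ⊆ M.E := by
      rw [hME]
      intro x hx
      rcases hx with hx | hx
      · subst hx; exact Finset.mem_Icc.mp (NLf_subset_Icc haN) |>.imp id id |> fun h => Set.mem_Icc.mpr ⟨h.1, h.2⟩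
      · simp only [Set.mem_singleton_iff] at hx; subst hx
        exact Set.mem_Icc.mpr (Finset.mem_Icc.mp (NLf_subset_Icc hbN))
    have hindep : M.Indep {a, b} := by
      rw [← Matroid.not_dep_iff hsubE]
      exact fun hd => hnp (Or.inl hd)
    exact indep_pair_base hMrk hab hindep

theorem Par_trans (hME : M.E = Set.Icc 1 n) {a b c : ℕ}
    (haN : a ∈ NLf n M) (hbN : b ∈ NLf n M) (hcN : c ∈ NLf n M)
    (hab : Par M a b) (hbc : Par M b c) : Par M a c := by
  rcases hab with hab | rfl
  · rcases hbc with hbc | rfl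
    · by_contra hnp
      have hac : a ≠ c := fun h => hnp (Or.inr h)
      have hsubE : ({a, c} : Set ℕ) ⊆ M.E := by
        rw [hME]
        rintro x (rfl | hx)
        · exact Set.mem_Icc.mpr (Finset.mem_Icc.mp (NLf_subset_Icc haN))
        · simp only [Set.mem_singleton_iff] at hx; subst hx
          exact Set.mem_Icc.mpr (Finset.mem_Icc.mp (NLf_subset_Icc hcN))
      have hiac : M.Indep {a, c} := by
        rw [← Matroid.not_dep_iff hsubE]
        exact fun hd => hnp (Or.inl hd)
      have hib : M.Indep {b} := (mem_NLf.mp hbN).2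
      have hlt : ({b} : Set ℕ).encard < ({a, c} : Set ℕ).encard := by
        rw [Set.encard_singleton, Set.encard_pair hac]
        norm_num
      obtain ⟨e, he, hei⟩ := hib.augment hiac hlt
      rcases he.1 with rfl | he'
      · exact hei.not_dep hab
      · simp only [Set.mem_singleton_iff] at he'; subst he'
        rw [Set.pair_comm] at hei
        exact hei.not_dep hbc
    · exact Or.inl hab
  · exact hbc

theorem mem_Clf_self {a : ℕ} (haN : a ∈ NLf n M) : a ∈ Clf n M a :=
  Finset.mem_filter.mpr ⟨haN, Par_refl a⟩

theorem Clf_subset : Clf n M a ⊆ NLf n M := Finset.filter_subset _ _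
theorem Tf_subset : Tf n M a ⊆ NLf n M := Finset.filter_subset _ _

theorem Clf_eq_of_par (hME : M.E = Set.Icc 1 n) {a x : ℕ}
    (haN : a ∈ NLf n M) (hxN : x ∈ NLf n M) (hp : Par M a x) :
    Clf n M a = Clf n M x := by
  ext b
  simp only [Clf, Finset.mem_filter, and_congr_right_iff]
  intro hbN
  constructor
  · intro h; exact Par_trans hME hxN haN hbN (Par_symm hp) h
  · intro h; exact Par_trans hME haN hxN hbN hp h

theorem Clf_card_add_Tf_card (a : ℕ) :
    (Clf n M a).card + (Tf n M a).card = (NLf n M).card :=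
  Finset.card_filter_add_card_filter_not (fun b => Par M a b)

/-- Every nonloop has a non-parallel nonloop. -/
theorem exists_nonpar (hME : M.E = Set.Icc 1 n) (hMrk : RankEq M 2) {a : ℕ}
    (haN : a ∈ NLf n M) : ∃ b ∈ NLf n M, ¬ Par M a b := by
  obtain ⟨B, hB⟩ := M.exists_isBase
  obtain ⟨u, v, huN, hvT, rfl⟩ := (base_iff_pair hME hMrk).mp hB
  simp only [Tf, Finset.mem_filter] at hvT
  obtain ⟨hvN, hnp⟩ := hvT
  by_cases hau : Par M a u
  · refine ⟨v, hvN, fun hav => ?_⟩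
    exact hnp (Par_trans hME huN haN hvN (Par_symm hau) hav)
  · exact ⟨u, huN, hau⟩

/-- `n ≥ 2`. -/
theorem two_le_n (hME : M.E = Set.Icc 1 n) (hMrk : RankEq M 2) : 2 ≤ n := by
  obtain ⟨B, hB⟩ := M.exists_isBase
  obtain ⟨u, v, huN, hvT, rfl⟩ := (base_iff_pair hME hMrk).mp hB
  simp only [Tf, Finset.mem_filter] at hvT
  have huv : u ≠ v := fun h => hvT.2 (Or.inr h)
  have h1 := Finset.mem_Icc.mp (NLf_subset_Icc huN)
  have h2 := Finset.mem_Icc.mp (NLf_subset_Icc hvT.1)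
  omega

end S10
noncomputable section S2

open scoped Classical

variable {n m : ℕ} {M : Matroid ℕ}

def eltF {n : ℕ} (i : Fin n) : ℕ := (i : ℕ) + 1

theorem eltF_injective {n : ℕ} : Function.Injective (eltF (n := n)) := by
  intro i j h
  simp only [eltF, add_left_inj] at h
  exact Fin.ext h

theorem eltF_mem_Icc {n : ℕ} (i : Fin n) : eltF i ∈ Finset.Icc 1 n := by
  have := i.isLt
  simp only [eltF, Finset.mem_Icc]
  omega

noncomputable def xvec (n m : ℕ) : Fin n → ℝ :=
  fun j => if (j : ℕ) = 0 then 1 else if (j : ℕ) < m + 1 then (m : ℝ)⁻¹ else 0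

theorem xvec_nonneg (hm : 1 ≤ m) (j : Fin n) : 0 ≤ xvec n m j := by
  unfold xvec
  split
  · norm_num
  · split
    · positivity
    · exact le_refl 0

/-- the "good tuple" predicate -/
def GoodT (n : ℕ) (M : Matroid ℕ) (m : ℕ) (v : Fin (m+1) → Fin n) : Prop :=
  eltF (v 0) ∈ NLf n M ∧ ∀ j : Fin (m+1), j ≠ 0 → eltF (v j) ∈ Tf n M (eltF (v 0))

theorem indVec_pair_apply {n : ℕ} {u v : Fin n} (huv : u ≠ v) (i : Fin n) :
    indVec n {eltF u, eltF v} i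
      = (if i = u then (1:ℝ) else 0) + (if i = v then (1:ℝ) else 0) := by
  have hmem : (((i : ℕ) + 1) ∈ ({eltF u, eltF v} : Set ℕ)) ↔ (i = u ∨ i = v) := by
    simp only [Set.mem_insert_iff, Set.mem_singleton_iff]
    constructor
    · rintro (h | h)
      · exact Or.inl (eltF_injective h)
      · exact Or.inr (eltF_injective h)
    · rintro (rfl | rfl)
      · exact Or.inl rfl
      · exact Or.inr rfl
  simp only [indVec]
  by_cases h : i = u ∨ i = v
  · rw [if_pos (hmem.mpr h)]
    rcases h with rfl | rfl
    · rw [if_pos rfl, if_neg huv]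
      norm_num
    · rw [if_neg (fun hh : i = u => huv hh.symm), if_pos rfl]
      norm_num
  · push_neg at h
    rw [if_neg (fun hh => h.1 ((hmem.mp hh).resolve_right h.2)), if_neg h.1, if_neg h.2]
    norm_num

theorem hull_subset_coord (hME : M.E = Set.Icc 1 n) {i₀ : Fin n}
    (hloop : eltF i₀ ∉ NLf n M) :
    basePolytope n M ⊆ {x : Fin n → ℝ | x i₀ = 0} := by
  apply convexHull_min
  · rintro x ⟨B, hB, rfl⟩
    simp only [Set.mem_setOf_eq, indVec]
    rw [if_neg]
    intro hmem
    apply hloop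
    rw [mem_NLf]
    refine ⟨Finset.mem_Icc.mp (eltF_mem_Icc i₀), ?_⟩
    exact hB.indep.subset (by simpa [eltF] using Set.singleton_subset_iff.mpr hmem)
  · intro x hx y hy a b ha hb hab
    simp only [Set.mem_setOf_eq] at hx hy ⊢
    simp [hx, hy]

theorem hull_subset_class (hME : M.E = Set.Icc 1 n) (hMrk : RankEq M 2) {a : ℕ}
    (haN : a ∈ NLf n M) :
    basePolytope n M ⊆
      {x : Fin n → ℝ |
        ∑ i ∈ Finset.univ.filter (fun i : Fin n => eltF i ∈ Clf n M a), x i ≤ 1} := by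
  apply convexHull_min
  · rintro x ⟨B, hB, rfl⟩
    simp only [Set.mem_setOf_eq]
    obtain ⟨u, v, huN, hvT, rfl⟩ := (base_iff_pair hME hMrk).mp hB
    simp only [Tf, Finset.mem_filter] at hvT
    obtain ⟨hvN, hnp⟩ := hvT
    have hsum : ∑ i ∈ Finset.univ.filter (fun i : Fin n => eltF i ∈ Clf n M a),
        indVec n {u, v} i
        = (((Finset.univ.filter (fun i : Fin n => eltF i ∈ Clf n M a)).filter
            (fun i : Fin n => eltF i ∈ ({u, v} : Set ℕ))).card : ℝ) := by
      rw [← Finset.sum_boole]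
      apply Finset.sum_congr rfl
      intro i _
      simp [indVec, eltF]
    rw [hsum]
    have hle : (((Finset.univ.filter (fun i : Fin n => eltF i ∈ Clf n M a)).filter
        (fun i : Fin n => eltF i ∈ ({u, v} : Set ℕ)))).card ≤ 1 := by
      rw [Finset.card_le_one]
      intro i hi i' hi'
      simp only [Finset.mem_filter, Finset.mem_univ, true_and, Set.mem_insert_iff,
        Set.mem_singleton_iff] at hi hi'
      have key : u ∈ Clf n M a → v ∈ Clf n M a → False := by
        intro hw hw'
        simp only [Clf, Finset.mem_filter] at hw hw'
        exact hnp (Par_trans hME huN haN hvN (Par_symm hw.2) hw'.2)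
      apply eltF_injective
      rcases hi.2 with h3 | h3 <;> rcases hi'.2 with h4 | h4
      · rw [h3, h4]
      · exact (key (h3 ▸ hi.1) (h4 ▸ hi'.1)).elim
      · exact (key (h4 ▸ hi'.1) (h3 ▸ hi.1)).elim
      · rw [h3, h4]
    exact_mod_cast hle
  · intro x hx y hy s t hs ht hst
    simp only [Set.mem_setOf_eq] at hx hy ⊢
    have : ∑ i ∈ Finset.univ.filter (fun i : Fin n => eltF i ∈ Clf n M a),
        (s • x + t • y) i
        = s * (∑ i ∈ Finset.univ.filter (fun i : Fin n => eltF i ∈ Clf n M a), x i)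
          + t * (∑ i ∈ Finset.univ.filter (fun i : Fin n => eltF i ∈ Clf n M a), y i) := by
      simp only [Pi.add_apply, Pi.smul_apply, smul_eq_mul]
      rw [Finset.sum_add_distrib, Finset.mul_sum, Finset.mul_sum]
    rw [this]
    calc s * (∑ i ∈ Finset.univ.filter (fun i : Fin n => eltF i ∈ Clf n M a), x i)
          + t * (∑ i ∈ Finset.univ.filter (fun i : Fin n => eltF i ∈ Clf n M a), y i)
        ≤ s * 1 + t * 1 := by
          gcongr
      _ = 1 := by rw [mul_one, mul_one, hst]

theorem cond_iff_good (hME : M.E = Set.Icc 1 n) (hMrk : RankEq M 2)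
    (hm : 1 ≤ m) (hmn : m + 1 ≤ n) (σ : Equiv.Perm (Fin n)) :
    ((fun i => xvec n m (σ i)) ∈ basePolytope n M) ↔
      GoodT n M m (fun k => σ.symm (Fin.castLE hmn k)) := by
  have hmR : (m : ℝ) ≠ 0 := by positivity
  set c : Fin (m+1) → Fin n := fun k => σ.symm (Fin.castLE hmn k) with hc
  have hcinj : Function.Injective c := fun k k' h => by
    apply Fin.castLE_injective hmn
    exact σ.symm.injective h
  have hkey : ∀ (i : Fin n) (k : Fin (m+1)), i = c k ↔ σ i = Fin.castLE hmn k := by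
    intro i k
    constructor
    · rintro rfl
      simp [hc]
    · intro h
      rw [hc]
      simp [← h]
  set y : Fin n → ℝ := fun i => xvec n m (σ i) with hy
  constructor
  · -- membership ⇒ good
    intro hmem
    by_contra hng
    unfold GoodT at hng
    push_neg at hng
    by_cases hA : eltF (c 0) ∈ NLf n M
    · obtain ⟨j, hj0, hjT⟩ := hng hA
      by_cases hBN : eltF (c j) ∈ NLf n M
      · -- parallel case
        have hpar : Par M (eltF (c 0)) (eltF (c j)) := by
          by_contra hnp
          exact hjT (Finset.mem_filter.mpr ⟨hBN, hnp⟩)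
        have hsub := hull_subset_class hME hMrk hA hmem
        simp only [Set.mem_setOf_eq] at hsub
        have hc0S : c 0 ∈ Finset.univ.filter (fun i : Fin n => eltF i ∈ Clf n M (eltF (c 0))) := by
          simp only [Finset.mem_filter, Finset.mem_univ, true_and]
          exact mem_Clf_self hA
        have hcjS : c j ∈ Finset.univ.filter (fun i : Fin n => eltF i ∈ Clf n M (eltF (c 0))) := by
          simp only [Finset.mem_filter, Finset.mem_univ, true_and]
          exact Finset.mem_filter.mpr ⟨hBN, hpar⟩
        have hne : c 0 ≠ c j := fun h => hj0 (hcinj h).symm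
        have hpairsub : ({c 0, c j} : Finset (Fin n)) ⊆
            Finset.univ.filter (fun i : Fin n => eltF i ∈ Clf n M (eltF (c 0))) := by
          intro i hi
          rcases Finset.mem_insert.mp hi with rfl | hi
          · exact hc0S
          · rw [Finset.mem_singleton.mp hi]; exact hcjS
        have hlow : (1 : ℝ) + (m : ℝ)⁻¹ ≤
            ∑ i ∈ Finset.univ.filter (fun i : Fin n => eltF i ∈ Clf n M (eltF (c 0))), y i := by
          have h1 : ∑ i ∈ ({c 0, c j} : Finset (Fin n)), y i = y (c 0) + y (c j) :=
            Finset.sum_pair hne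
          have h2 : y (c 0) = 1 := by
            have : σ (c 0) = Fin.castLE hmn 0 := (hkey (c 0) 0).mp rfl
            simp only [hy, this, xvec, Fin.coe_castLE]
            norm_num
          have h3 : y (c j) = (m : ℝ)⁻¹ := by
            have h4 : σ (c j) = Fin.castLE hmn j := (hkey (c j) j).mp rfl
            have h5 : ((Fin.castLE hmn j : Fin n) : ℕ) = (j : ℕ) := rfl
            have hj0' : (j : ℕ) ≠ 0 := fun h => hj0 (Fin.ext h)
            simp only [hy, h4, xvec, h5, if_neg hj0', if_pos j.isLt]
          calc (1 : ℝ) + (m : ℝ)⁻¹ = ∑ i ∈ ({c 0, c j} : Finset (Fin n)), y i := by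
                rw [h1, h2, h3]
            _ ≤ _ := by
                apply Finset.sum_le_sum_of_subset_of_nonneg hpairsub
                intro i _ _
                exact xvec_nonneg hm (σ i)
        have : (1 : ℝ) + (m : ℝ)⁻¹ ≤ 1 := le_trans hlow hsub
        have : (0:ℝ) < (m : ℝ)⁻¹ := by positivity
        linarith
      · -- c j is a loop
        have hsub := hull_subset_coord hME hBN hmem
        simp only [Set.mem_setOf_eq] at hsub
        have h4 : σ (c j) = Fin.castLE hmn j := (hkey (c j) j).mp rfl
        have hj0' : (j : ℕ) ≠ 0 := fun h => hj0 (Fin.ext h)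
        have : y (c j) = (m : ℝ)⁻¹ := by
          simp only [hy, h4, xvec, Fin.coe_castLE]
          rw [if_neg hj0', if_pos j.isLt]
        rw [hsub] at this
        exact hmR (by exact_mod_cast (inv_eq_zero.mp this.symm))
    · -- c 0 is a loop
      have hsub := hull_subset_coord hME hA hmem
      simp only [Set.mem_setOf_eq] at hsub
      have : y (c 0) = 1 := by
        have h2 : σ (c 0) = Fin.castLE hmn 0 := (hkey (c 0) 0).mp rfl
        simp only [hy, h2, xvec, Fin.coe_castLE]
        norm_num
      rw [hsub] at this
      exact one_ne_zero this.symm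
  · -- good ⇒ membership
    rintro ⟨hA, hT⟩
    set J : Finset (Fin (m+1)) := Finset.univ.erase 0 with hJ
    have hJcard : J.card = m := by
      rw [hJ, Finset.card_erase_of_mem (Finset.mem_univ 0), Finset.card_univ, Fintype.card_fin]
      omega
    set z : Fin (m+1) → (Fin n → ℝ) := fun j => indVec n {eltF (c 0), eltF (c j)} with hz
    have hyz : y = (m : ℝ)⁻¹ • ∑ j ∈ J, z j := by
      funext i
      have hzsum : (((m : ℝ)⁻¹ • ∑ j ∈ J, z j) i)
          = (m : ℝ)⁻¹ * ∑ j ∈ J, z j i := by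
        simp [Finset.sum_apply]
      rw [hzsum]
      have hzval : ∀ j ∈ J, z j i
          = (if i = c 0 then (1:ℝ) else 0) + (if i = c j then (1:ℝ) else 0) := by
        intro j hj
        have hj0 : j ≠ 0 := Finset.ne_of_mem_erase hj
        exact indVec_pair_apply (fun h => hj0 (hcinj h).symm) i
      rw [Finset.sum_congr rfl hzval, Finset.sum_add_distrib, Finset.sum_const, hJcard]
      have hsum2 : ∑ j ∈ J, (if i = c j then (1:ℝ) else 0)
          = ((J.filter (fun j => i = c j)).card : ℝ) := by
        rw [Finset.sum_boole]
      rw [hsum2]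
      -- case analysis on σ i
      by_cases h0 : (σ i : ℕ) = 0
      · have hi0 : i = c 0 := by
          rw [hkey i 0]
          exact Fin.ext h0
        have hfe : J.filter (fun j => i = c j) = ∅ := by
          apply Finset.filter_false_of_mem
          intro j hj hcj
          have h' : c 0 = c j := by rw [← hi0]; exact hcj
          exact Finset.ne_of_mem_erase hj (hcinj h').symm
        rw [if_pos hi0, hfe]
        simp only [hy, xvec, h0, if_pos]
        field_simp
        simp
      · by_cases h1 : (σ i : ℕ) < m + 1
        · set j₀ : Fin (m+1) := ⟨(σ i : ℕ), h1⟩ with hj₀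
          have hij₀ : i = c j₀ := by
            rw [hkey i j₀]
            exact Fin.ext rfl
          have hj₀0 : j₀ ≠ 0 := fun h => h0 (by rw [hj₀] at h; exact congrArg Fin.val h)
          have hi0 : i ≠ c 0 := fun h => hj₀0 (hcinj (hij₀ ▸ h))
          have hfe : J.filter (fun j => i = c j) = {j₀} := by
            ext j
            simp only [Finset.mem_filter, Finset.mem_singleton, hJ, Finset.mem_erase,
              Finset.mem_univ, and_true, true_and]
            constructor
            · rintro ⟨hj0, hcj⟩
              have h' : c j₀ = c j := by rw [← hij₀]; exact hcj
              exact (hcinj h').symm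
            · rintro rfl
              exact ⟨hj₀0, hij₀⟩
          rw [if_neg hi0, hfe]
          simp only [hy, xvec, h0, if_neg h0, if_pos h1, Finset.card_singleton]
          norm_num
        · have hnek : ∀ k : Fin (m+1), i ≠ c k := by
            intro k hk
            rw [hkey i k] at hk
            have : (σ i : ℕ) = (k : ℕ) := congrArg Fin.val hk
            omega
          have hfe : J.filter (fun j => i = c j) = ∅ := by
            apply Finset.filter_false_of_mem
            intro j _ hcj
            exact hnek j hcj
          rw [if_neg (hnek 0), hfe]
          simp only [hy, xvec, if_neg h0, if_neg h1]
          norm_num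
    rw [hyz]
    have hcm : Finset.centerMass J (fun _ => (1:ℝ)) z = (m : ℝ)⁻¹ • ∑ j ∈ J, z j := by
      rw [Finset.centerMass]
      rw [Finset.sum_const, hJcard]
      simp [nsmul_eq_mul]
    rw [← hcm]
    apply Finset.centerMass_mem_convexHull
    · intro j _; norm_num
    · rw [Finset.sum_const, hJcard, nsmul_eq_mul, mul_one]
      exact_mod_cast Nat.lt_of_lt_of_le Nat.zero_lt_one hm
    · intro j hj
      refine ⟨{eltF (c 0), eltF (c j)}, ?_, rfl⟩
      rw [base_iff_pair hME hMrk]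
      exact ⟨eltF (c 0), eltF (c j), hA, hT j (Finset.ne_of_mem_erase hj), rfl⟩

end S2
noncomputable section S3

open scoped Classical
open Function

variable {n m : ℕ} {M : Matroid ℕ}

theorem exists_perm_comp {α β : Type*} [Fintype α] [DecidableEq α]
    (f g : β → α) (hf : Injective f) (hg : Injective g) :
    ∃ π : Equiv.Perm α, ∀ b, π (f b) = g b := by
  let e_in : {x // x ∈ Set.range f} ≃ {x // x ∈ Set.range g} :=
    (Equiv.ofInjective f hf).symm.trans (Equiv.ofInjective g hg)
  have hcc : Fintype.card {x // ¬ x ∈ Set.range f} = Fintype.card {x // ¬ x ∈ Set.range g} := by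
    rw [Fintype.card_subtype_compl, Fintype.card_subtype_compl]
    congr 1
    exact Fintype.card_congr e_in
  let e_out : {x // ¬ x ∈ Set.range f} ≃ {x // ¬ x ∈ Set.range g} :=
    Fintype.equivOfCardEq hcc
  refine ⟨(Equiv.sumCompl (· ∈ Set.range f)).symm.trans ((e_in.sumCongr e_out).trans
    (Equiv.sumCompl (· ∈ Set.range g))), ?_⟩
  intro b
  simp only [Equiv.trans_apply]
  rw [Equiv.sumCompl_symm_apply_of_pos (Set.mem_range_self b)]
  simp only [Equiv.sumCongr_apply, Sum.map_inl, Equiv.sumCompl_apply_inl]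
  show ((Equiv.ofInjective g hg) ((Equiv.ofInjective f hf).symm ⟨f b, Set.mem_range_self b⟩) : α)
    = g b
  rw [Equiv.ofInjective_symm_apply]
  simp [Equiv.ofInjective_apply]

/-- restriction of a permutation to the first m+1 coordinates -/
def resMap (hmn : m + 1 ≤ n) (τ : Equiv.Perm (Fin n)) : Fin (m+1) → Fin n :=
  fun k => τ (Fin.castLE hmn k)

theorem resMap_injective (hmn : m + 1 ≤ n) (τ : Equiv.Perm (Fin n)) :
    Injective (resMap hmn τ) :=
  fun k k' h => Fin.castLE_injective hmn (τ.injective h)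

theorem fib_card_eq (hmn : m + 1 ≤ n) {v w : Fin (m+1) → Fin n}
    (hv : Injective v) (hw : Injective w) :
    (Finset.univ.filter (fun τ : Equiv.Perm (Fin n) => resMap hmn τ = v)).card =
    (Finset.univ.filter (fun τ : Equiv.Perm (Fin n) => resMap hmn τ = w)).card := by
  obtain ⟨π, hπ⟩ := exists_perm_comp v w hv hw
  refine Finset.card_bij' (fun τ _ => τ.trans π) (fun τ _ => τ.trans π.symm) ?_ ?_ ?_ ?_
  · intro τ hτ
    simp only [Finset.mem_filter, Finset.mem_univ, true_and] at hτ ⊢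
    funext k
    have h1 : resMap hmn τ k = v k := congrFun hτ k
    simp only [resMap, Equiv.trans_apply] at h1 ⊢
    rw [h1, hπ]
  · intro τ hτ
    simp only [Finset.mem_filter, Finset.mem_univ, true_and] at hτ ⊢
    funext k
    have h1 : resMap hmn τ k = w k := congrFun hτ k
    simp only [resMap, Equiv.trans_apply] at h1 ⊢
    rw [h1, ← hπ k]
    simp
  · intro τ _
    exact Equiv.ext (fun i => by simp)
  · intro τ _
    exact Equiv.ext (fun i => by simp)

theorem good_count (hmn : m + 1 ≤ n) :
    ∃ c : ℕ, 0 < c ∧ ∀ (M : Matroid ℕ),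
      (Finset.univ.filter (fun τ : Equiv.Perm (Fin n) => GoodT n M m (resMap hmn τ))).card
        = (Finset.univ.filter
            (fun v : Fin (m+1) → Fin n => Injective v ∧ GoodT n M m v)).card * c := by
  set c := (Finset.univ.filter
    (fun τ : Equiv.Perm (Fin n) => resMap hmn τ = Fin.castLE hmn)).card with hc
  have hA : ∀ v : Fin (m+1) → Fin n, Injective v →
      (Finset.univ.filter (fun τ : Equiv.Perm (Fin n) => resMap hmn τ = v)).card = c :=
    fun v hv => fib_card_eq hmn hv (Fin.castLE_injective hmn)
  have hIcard : (Finset.univ : Finset (Equiv.Perm (Fin n))).card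
      = (Finset.univ.filter (fun v : Fin (m+1) → Fin n => Injective v)).card * c := by
    rw [Finset.card_eq_sum_card_fiberwise
      (f := resMap hmn)
      (t := Finset.univ.filter (fun v : Fin (m+1) → Fin n => Injective v))
      (fun τ _ => Finset.mem_filter.mpr ⟨Finset.mem_univ _, resMap_injective hmn τ⟩)]
    have hper : ∀ v ∈ Finset.univ.filter (fun v : Fin (m+1) → Fin n => Injective v),
        ((Finset.univ : Finset (Equiv.Perm (Fin n))).filter
          (fun τ => resMap hmn τ = v)).card = c :=
      fun v hv => hA v (Finset.mem_filter.mp hv).2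
    rw [Finset.sum_congr rfl hper, Finset.sum_const, smul_eq_mul]
  have hcpos : 0 < c := by
    rcases Nat.eq_zero_or_pos c with h0 | h
    · exfalso
      rw [h0, Nat.mul_zero] at hIcard
      have : (0 : ℕ) < (Finset.univ : Finset (Equiv.Perm (Fin n))).card :=
        Finset.card_pos.mpr ⟨1, Finset.mem_univ 1⟩
      omega
    · exact h
  refine ⟨c, hcpos, ?_⟩
  intro M
  rw [Finset.card_eq_sum_card_fiberwise
    (f := resMap hmn)
    (t := Finset.univ.filter (fun v : Fin (m+1) → Fin n => Injective v ∧ GoodT n M m v))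
    (fun τ hτ => Finset.mem_filter.mpr ⟨Finset.mem_univ _,
      resMap_injective hmn τ, (Finset.mem_filter.mp hτ).2⟩)]
  have hper : ∀ v ∈ Finset.univ.filter
      (fun v : Fin (m+1) → Fin n => Injective v ∧ GoodT n M m v),
      ((Finset.univ.filter (fun τ : Equiv.Perm (Fin n) => GoodT n M m (resMap hmn τ))).filter
        (fun τ => resMap hmn τ = v)).card = c := by
    intro v hv
    have hveq : (Finset.univ.filter
        (fun τ : Equiv.Perm (Fin n) => GoodT n M m (resMap hmn τ))).filter
        (fun τ => resMap hmn τ = v)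
        = Finset.univ.filter (fun τ : Equiv.Perm (Fin n) => resMap hmn τ = v) := by
      ext τ
      simp only [Finset.mem_filter, Finset.mem_univ, true_and]
      constructor
      · exact fun h => h.2
      · intro h
        refine ⟨?_, h⟩
        rw [h]
        exact (Finset.mem_filter.mp hv).2.2
    rw [hveq]
    exact hA v (Finset.mem_filter.mp hv).2.1
  rw [Finset.sum_congr rfl hper, Finset.sum_const, smul_eq_mul]

theorem not_mem_Tf_self (a : ℕ) : a ∉ Tf n M a := by
  simp [Tf, Par_refl]

theorem Tc_card (a : ℕ) :
    (Finset.univ.filter (fun i : Fin n => eltF i ∈ Tf n M a)).card = (Tf n M a).card := by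
  apply Finset.card_bij (fun i _ => eltF i)
  · intro i hi
    exact (Finset.mem_filter.mp hi).2
  · intro i _ i' _ h
    exact eltF_injective h
  · intro b hb
    have h1 := Finset.mem_Icc.mp (NLf_subset_Icc (Tf_subset hb))
    refine ⟨⟨b - 1, by omega⟩, ?_, ?_⟩
    · have heq : eltF (⟨b - 1, by omega⟩ : Fin n) = b := by
        simp only [eltF]
        omega
      simp only [Finset.mem_filter, Finset.mem_univ, true_and, heq]
      exact hb
    · simp only [eltF]
      omega

theorem Vcard (hmn : m + 1 ≤ n) :
    (Finset.univ.filter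
      (fun v : Fin (m+1) → Fin n => Injective v ∧ GoodT n M m v)).card
      = ∑ a ∈ NLf n M, Nat.descFactorial ((Tf n M a).card) m := by
  rw [Finset.card_eq_sum_card_fiberwise
    (f := fun v : Fin (m+1) → Fin n => v 0)
    (t := Finset.univ.filter (fun a' : Fin n => eltF a' ∈ NLf n M))
    (fun v hv => Finset.mem_filter.mpr ⟨Finset.mem_univ _,
      (Finset.mem_filter.mp hv).2.2.1⟩)]
  have hper : ∀ a' ∈ Finset.univ.filter (fun a' : Fin n => eltF a' ∈ NLf n M),
      ((Finset.univ.filter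
        (fun v : Fin (m+1) → Fin n => Injective v ∧ GoodT n M m v)).filter
        (fun v => v 0 = a')).card
      = Nat.descFactorial ((Tf n M (eltF a')).card) m := by
    intro a' ha'
    have haN : eltF a' ∈ NLf n M := (Finset.mem_filter.mp ha').2
    set Tc : Finset (Fin n) :=
      Finset.univ.filter (fun i : Fin n => eltF i ∈ Tf n M (eltF a')) with hTc
    have htarget : (Finset.univ : Finset (Fin m ↪ {x // x ∈ Tc})).card
        = Nat.descFactorial ((Tf n M (eltF a')).card) m := by
      rw [Finset.card_univ, Fintype.card_embedding_eq, Fintype.card_coe, Fintype.card_fin,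
        Tc_card]
    rw [← htarget]
    have hTcne : ∀ x : {x // x ∈ Tc}, (x : Fin n) ≠ a' := by
      rintro ⟨x, hx⟩ h
      simp only at h
      subst h
      have := (Finset.mem_filter.mp hx).2
      have h2 := Tf_subset this
      exact not_mem_Tf_self (eltF x) (by exact this)
    refine Finset.card_bij'
      (fun (v : Fin (m+1) → Fin n) (hv : v ∈ (Finset.univ.filter
        (fun v : Fin (m+1) → Fin n => Injective v ∧ GoodT n M m v)).filter
        (fun v => v 0 = a')) =>
        (⟨fun j : Fin m => (⟨v j.succ, by
          have h1 := Finset.mem_filter.mp hv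
          have h2 := Finset.mem_filter.mp h1.1
          have hg := h2.2.2.2 j.succ (Fin.succ_ne_zero j)
          rw [h1.2] at hg
          exact Finset.mem_filter.mpr ⟨Finset.mem_univ _, hg⟩⟩ : {x // x ∈ Tc}), by
          intro j j' hjj
          have h1 := Finset.mem_filter.mp hv
          have hinj := (Finset.mem_filter.mp h1.1).2.1
          have := hinj (Subtype.ext_iff.mp hjj)
          exact Fin.succ_injective _ this⟩ : Fin m ↪ {x // x ∈ Tc}))
      (fun u _ => fun k : Fin (m+1) => Fin.cases a' (fun j => (u j : Fin n)) k)
      ?_ ?_ ?_ ?_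
    · intro v _
      exact Finset.mem_univ _
    · intro u _
      set v' : Fin (m+1) → Fin n := fun k => Fin.cases a' (fun j => (u j : Fin n)) k with hv'
      have hv'0 : v' 0 = a' := rfl
      have hv'succ : ∀ j : Fin m, v' j.succ = (u j : Fin n) := fun j => rfl
      have hinj : Injective v' := by
        intro k k' hkk
        rcases Fin.eq_zero_or_eq_succ k with rfl | ⟨j, rfl⟩ <;>
          rcases Fin.eq_zero_or_eq_succ k' with rfl | ⟨j', rfl⟩
        · rfl
        · exact absurd (by rw [hv'0, hv'succ] at hkk; exact hkk.symm) (hTcne (u j'))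
        · exact absurd (by rw [hv'0, hv'succ] at hkk; exact hkk) (hTcne (u j))
        · rw [hv'succ, hv'succ] at hkk
          exact congrArg Fin.succ (u.injective (Subtype.ext hkk))
      refine Finset.mem_filter.mpr ⟨Finset.mem_filter.mpr ⟨Finset.mem_univ _, hinj, ?_, ?_⟩,
        hv'0⟩
      · exact haN
      · intro j hj
        obtain ⟨j', rfl⟩ := Fin.eq_succ_of_ne_zero hj
        exact (Finset.mem_filter.mp (u j').2).2
    · intro v hv
      funext k
      have h1 := Finset.mem_filter.mp hv
      rcases Fin.eq_zero_or_eq_succ k with rfl | ⟨j, rfl⟩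
      · exact h1.2.symm
      · rfl
    · intro u _
      exact Function.Embedding.ext (fun j => Subtype.ext rfl)
  rw [Finset.sum_congr rfl hper]
  apply Finset.sum_bij (fun a' _ => eltF a')
  · intro a' ha'
    exact (Finset.mem_filter.mp ha').2
  · intro a' _ b' _ h
    exact eltF_injective h
  · intro a ha
    have h1 := Finset.mem_Icc.mp (NLf_subset_Icc ha)
    refine ⟨⟨a - 1, by omega⟩, ?_, ?_⟩
    · have heq : eltF (⟨a - 1, by omega⟩ : Fin n) = a := by
        simp only [eltF]
        omega
      simp only [Finset.mem_filter, Finset.mem_univ, true_and, heq]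
      exact ha
    · simp only [eltF]
      omega
  · intro a' _
    rfl

theorem count_mem_eq {X Y : Set (Fin n → ℝ)} (h : symInd n X = symInd n Y) (x : Fin n → ℝ) :
    (Finset.univ.filter (fun σ : Equiv.Perm (Fin n) => (fun i => x (σ i)) ∈ X)).card =
    (Finset.univ.filter (fun σ : Equiv.Perm (Fin n) => (fun i => x (σ i)) ∈ Y)).card := by
  have h0 := congrFun h x
  unfold symInd at h0
  have hne : (1 / (n.factorial : ℝ)) ≠ 0 := by
    have : (0:ℝ) < (n.factorial : ℝ) := by exact_mod_cast n.factorial_pos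
    positivity
  have h1 := mul_left_cancel₀ hne h0
  have h2 : ∀ (Z : Set (Fin n → ℝ)),
      (∑ σ : Equiv.Perm (Fin n), Set.indicator Z 1 (fun i => x (σ i)))
      = ((Finset.univ.filter
          (fun σ : Equiv.Perm (Fin n) => (fun i => x (σ i)) ∈ Z)).card : ℝ) := by
    intro Z
    rw [← Finset.sum_boole]
    apply Finset.sum_congr rfl
    intro σ _
    rw [Set.indicator_apply]
    simp
  rw [h2 X, h2 Y] at h1
  exact_mod_cast h1

theorem card_inv_eq (p : Equiv.Perm (Fin n) → Prop) :
    (Finset.univ.filter (fun σ : Equiv.Perm (Fin n) => p σ.symm)).card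
      = (Finset.univ.filter (fun σ : Equiv.Perm (Fin n) => p σ)).card := by
  apply Finset.card_bij (fun σ _ => σ.symm)
  · intro σ hσ
    simp only [Finset.mem_filter, Finset.mem_univ, true_and] at hσ ⊢
    exact hσ
  · intro σ _ σ' _ h
    have := congrArg Equiv.symm h
    simpa using this
  · intro σ hσ
    simp only [Finset.mem_filter, Finset.mem_univ, true_and] at hσ ⊢
    exact ⟨σ.symm, by simpa using hσ, rfl⟩

end S3
theorem sum_desc_top (B : ℕ) (μ : Multiset ℕ) (hμ : ∀ q ∈ μ, q ≤ B + 1) :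
    (μ.map (fun q => q.descFactorial (B+1))).sum = (μ.count (B+1)) * (B+1).factorial := by
  induction μ using Multiset.induction with
  | empty => simp
  | cons a s ih =>
    have ha : a ≤ B + 1 := hμ a (Multiset.mem_cons_self a s)
    have ihs := ih (fun q hq => hμ q (Multiset.mem_cons_of_mem hq))
    rw [Multiset.map_cons, Multiset.sum_cons, ihs, Multiset.count_cons]
    by_cases hab : a = B + 1
    · subst hab
      rw [if_pos rfl, Nat.descFactorial_self]
      ring
    · rw [Nat.descFactorial_of_lt (lt_of_le_of_ne ha hab), if_neg (fun h => hab h.symm)]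
      ring

theorem multiset_eq_of_desc_sums (B : ℕ) :
    ∀ (μ ν : Multiset ℕ), (∀ q ∈ μ, 1 ≤ q ∧ q ≤ B) → (∀ q ∈ ν, 1 ≤ q ∧ q ≤ B) →
    (∀ m, 1 ≤ m → m ≤ B →
      (μ.map (fun q => q.descFactorial m)).sum = (ν.map (fun q => q.descFactorial m)).sum) →
    μ = ν := by
  induction B with
  | zero =>
    intro μ ν hμ hν _
    have h1 : μ = 0 := Multiset.eq_zero_of_forall_notMem
      (fun q hq => by have := hμ q hq; omega)
    have h2 : ν = 0 := Multiset.eq_zero_of_forall_notMem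
      (fun q hq => by have := hν q hq; omega)
    rw [h1, h2]
  | succ B ih =>
    intro μ ν hμ hν hmom
    have hc : μ.count (B+1) = ν.count (B+1) := by
      have h1 := sum_desc_top B μ (fun q hq => (hμ q hq).2)
      have h2 := sum_desc_top B ν (fun q hq => (hν q hq).2)
      have h3 := hmom (B+1) (by omega) le_rfl
      rw [h1, h2] at h3
      exact Nat.eq_of_mul_eq_mul_right (Nat.factorial_pos _) h3
    classical
    have hdecμ : μ.filter (fun q => q = B+1) + μ.filter (fun q => ¬ q = B+1) = μ :=
      Multiset.filter_add_not _ μ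
    have hdecν : ν.filter (fun q => q = B+1) + ν.filter (fun q => ¬ q = B+1) = ν :=
      Multiset.filter_add_not _ ν
    have hrepμ : μ.filter (fun q => q = B+1) = Multiset.replicate (μ.count (B+1)) (B+1) :=
      Multiset.filter_eq' μ (B+1)
    have hrepν : ν.filter (fun q => q = B+1) = Multiset.replicate (ν.count (B+1)) (B+1) :=
      Multiset.filter_eq' ν (B+1)
    have hsum : ∀ (ρ : Multiset ℕ) (m : ℕ),
        ((Multiset.replicate (ρ.count (B+1)) (B+1) + ρ.filter (fun q => ¬ q = B+1)).map
          (fun q => q.descFactorial m)).sum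
        = ρ.count (B+1) * (B+1).descFactorial m
          + ((ρ.filter (fun q => ¬ q = B+1)).map (fun q => q.descFactorial m)).sum := by
      intro ρ m
      rw [Multiset.map_add, Multiset.sum_add, Multiset.map_replicate, Multiset.sum_replicate,
        smul_eq_mul]
    have heq' : μ.filter (fun q => ¬ q = B+1) = ν.filter (fun q => ¬ q = B+1) := by
      apply ih
      · intro q hq
        have h1 := Multiset.of_mem_filter hq
        have h2 := hμ q (Multiset.mem_of_mem_filter hq)
        omega
      · intro q hq
        have h1 := Multiset.of_mem_filter hq
        have h2 := hν q (Multiset.mem_of_mem_filter hq)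
        omega
      · intro m hm1 hm2
        have h3 := hmom m hm1 (by omega)
        rw [← hdecμ, ← hdecν, hrepμ, hrepν] at h3
        rw [hsum μ m, hsum ν m, hc] at h3
        exact Nat.add_left_cancel h3
    rw [← hdecμ, ← hdecν, hrepμ, hrepν, hc, heq']
open scoped Classical in
noncomputable def finsetBij {K L : Finset ℕ} (h : K.card = L.card) : ℕ → ℕ :=
  fun x => if hx : x ∈ K then
    ((Fintype.equivOfCardEq
      (by rw [Fintype.card_coe, Fintype.card_coe]; exact h) : {y // y ∈ K} ≃ {y // y ∈ L})
        ⟨x, hx⟩ : ℕ)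
  else x

theorem finsetBij_bijOn {K L : Finset ℕ} (h : K.card = L.card) :
    Set.BijOn (finsetBij h) ↑K ↑L := by
  set e := (Fintype.equivOfCardEq
      (by rw [Fintype.card_coe, Fintype.card_coe]; exact h) : {y // y ∈ K} ≃ {y // y ∈ L})
  refine ⟨?_, ?_, ?_⟩
  · intro x hx
    simp only [Finset.mem_coe] at hx
    simp only [finsetBij, dif_pos hx]
    exact (e ⟨x, hx⟩).2
  · intro x hx y hy hxy
    simp only [Finset.mem_coe] at hx hy
    simp only [finsetBij, dif_pos hx, dif_pos hy] at hxy
    have : e ⟨x, hx⟩ = e ⟨y, hy⟩ := Subtype.ext hxy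
    simpa using e.injective this
  · intro y hy
    simp only [Finset.mem_coe] at hy
    refine ⟨(e.symm ⟨y, hy⟩ : ℕ), ?_, ?_⟩
    · simp only [Finset.mem_coe]; exact (e.symm ⟨y, hy⟩).2
    · simp only [finsetBij, dif_pos (e.symm ⟨y, hy⟩).2]
      have : (⟨(e.symm ⟨y, hy⟩ : ℕ), (e.symm ⟨y, hy⟩).2⟩ : {y // y ∈ K}) = e.symm ⟨y, hy⟩ :=
        Subtype.ext rfl
      rw [this, e.apply_symm_apply]

theorem glue {s t : Multiset (Finset ℕ)}
    (hrel : Multiset.Rel (fun K L => K.card = L.card) s t) :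
    (∀ a : ℕ, s.countP (fun K => a ∈ K) ≤ 1) →
    (∀ a : ℕ, t.countP (fun L => a ∈ L) ≤ 1) →
    ∃ f : ℕ → ℕ, Set.BijOn f {a | ∃ K ∈ s, a ∈ K} {a | ∃ L ∈ t, a ∈ L} ∧
      ∀ K ∈ s, ∃ L ∈ t, f '' ↑K = ↑L := by
  induction hrel with
  | zero =>
    intro _ _
    refine ⟨id, ?_, by simp⟩
    have h1 : {a : ℕ | ∃ K ∈ (0 : Multiset (Finset ℕ)), a ∈ K} = ∅ := by simp
    rw [h1]
    exact Set.bijOn_empty id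
  | @cons K L s₀ t₀ hKL hrel0 ih =>
    intro hs ht
    have hs₀ : ∀ a : ℕ, s₀.countP (fun K => a ∈ K) ≤ 1 := by
      intro a
      have := hs a
      rw [Multiset.countP_cons] at this
      omega
    have ht₀ : ∀ a : ℕ, t₀.countP (fun L => a ∈ L) ≤ 1 := by
      intro a
      have := ht a
      rw [Multiset.countP_cons] at this
      omega
    obtain ⟨f₁, hbij1, himg1⟩ := ih hs₀ ht₀
    have hdisjK : ∀ a ∈ K, ¬ ∃ K' ∈ s₀, a ∈ K' := by
      rintro a ha ⟨K', hK', haK'⟩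
      have h1 := hs a
      rw [Multiset.countP_cons, if_pos ha] at h1
      have h2 := Multiset.countP_pos_of_mem (p := fun P => a ∈ P) hK' haK'
      omega
    have hdisjL : ∀ b ∈ L, ¬ ∃ L' ∈ t₀, b ∈ L' := by
      rintro b hb ⟨L', hL', hbL'⟩
      have h1 := ht b
      rw [Multiset.countP_cons, if_pos hb] at h1
      have h2 := Multiset.countP_pos_of_mem (p := fun P => b ∈ P) hL' hbL'
      omega
    set f : ℕ → ℕ := fun x => if x ∈ K then finsetBij hKL x else f₁ x with hfdef
    have hfK : Set.EqOn (finsetBij hKL) f ↑K := fun x hx => by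
      simp only [hfdef, if_pos (Finset.mem_coe.mp hx)]
    have hfU : Set.EqOn f₁ f {a | ∃ K' ∈ s₀, a ∈ K'} := by
      intro x hx
      have : x ∉ K := fun hxK => hdisjK x hxK hx
      simp only [hfdef, if_neg this]
    have hb1 : Set.BijOn f ↑K ↑L := (finsetBij_bijOn hKL).congr hfK
    have hb2 : Set.BijOn f {a | ∃ K' ∈ s₀, a ∈ K'} {a | ∃ L' ∈ t₀, a ∈ L'} :=
      hbij1.congr hfU
    have hUs : {a : ℕ | ∃ P ∈ K ::ₘ s₀, a ∈ P} = ↑K ∪ {a | ∃ P ∈ s₀, a ∈ P} := by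
      ext a
      simp only [Set.mem_setOf_eq, Multiset.mem_cons, Set.mem_union, Finset.mem_coe]
      constructor
      · rintro ⟨P, (rfl | hP), haP⟩
        · exact Or.inl haP
        · exact Or.inr ⟨P, hP, haP⟩
      · rintro (h | ⟨P, hP, haP⟩)
        · exact ⟨K, Or.inl rfl, h⟩
        · exact ⟨P, Or.inr hP, haP⟩
    have hUt : {a : ℕ | ∃ P ∈ L ::ₘ t₀, a ∈ P} = ↑L ∪ {a | ∃ P ∈ t₀, a ∈ P} := by
      ext a
      simp only [Set.mem_setOf_eq, Multiset.mem_cons, Set.mem_union, Finset.mem_coe]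
      constructor
      · rintro ⟨P, (rfl | hP), haP⟩
        · exact Or.inl haP
        · exact Or.inr ⟨P, hP, haP⟩
      · rintro (h | ⟨P, hP, haP⟩)
        · exact ⟨L, Or.inl rfl, h⟩
        · exact ⟨P, Or.inr hP, haP⟩
    refine ⟨f, ?_, ?_⟩
    · rw [hUs, hUt]
      apply hb1.union hb2
      intro x hx y hy hxy
      rcases hx with hx | hx
      · rcases hy with hy | hy
        · exact hb1.injOn hx hy hxy
        · exfalso
          have h1 : f x ∈ ↑L := hb1.mapsTo hx
          have h2 : f y ∈ {a | ∃ L' ∈ t₀, a ∈ L'} := hb2.mapsTo hy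
          rw [hxy] at h1
          exact hdisjL (f y) h1 h2
      · rcases hy with hy | hy
        · exfalso
          have h1 : f y ∈ ↑L := hb1.mapsTo hy
          have h2 : f x ∈ {a | ∃ L' ∈ t₀, a ∈ L'} := hb2.mapsTo hx
          rw [← hxy] at h1
          exact hdisjL (f x) h1 h2
        · exact hb2.injOn hx hy hxy
    · intro P hP
      rcases Multiset.mem_cons.mp hP with rfl | hP₀
      · exact ⟨L, Multiset.mem_cons_self _ _, hb1.image_eq⟩
      · obtain ⟨L', hL', himg⟩ := himg1 P hP₀
        refine ⟨L', Multiset.mem_cons_of_mem hL', ?_⟩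
        rw [← himg]
        apply Set.image_congr
        intro a ha
        have haU : a ∈ {a | ∃ K' ∈ s₀, a ∈ K'} := ⟨P, hP₀, ha⟩
        exact (hfU haU).symm
noncomputable section SMain

open scoped Classical
open Function

variable {n : ℕ} {M : Matroid ℕ}

theorem Tf_card_pos (hME : M.E = Set.Icc 1 n) (hMrk : RankEq M 2) {a : ℕ}
    (haN : a ∈ NLf n M) : 0 < (Tf n M a).card := by
  obtain ⟨b, hbN, hnp⟩ := exists_nonpar hME hMrk haN
  exact Finset.card_pos.mpr ⟨b, Finset.mem_filter.mpr ⟨hbN, hnp⟩⟩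

theorem Tf_card_le (haN : a ∈ NLf n M) : (Tf n M a).card ≤ n - 1 := by
  have hsub : Tf n M a ⊆ (Finset.Icc 1 n).erase a := by
    intro b hb
    have hb' := Finset.mem_filter.mp hb
    refine Finset.mem_erase.mpr ⟨?_, NLf_subset_Icc hb'.1⟩
    intro hba
    exact hb'.2 (Or.inr hba.symm)
  calc (Tf n M a).card ≤ ((Finset.Icc 1 n).erase a).card := Finset.card_le_card hsub
    _ = (Finset.Icc 1 n).card - 1 := Finset.card_erase_of_mem (NLf_subset_Icc haN)
    _ = n - 1 := by rw [Nat.card_Icc]; omega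

/-- The class multiset with multiplicity: value `(Clf a).card` for each nonloop `a`. -/
theorem class_partition_count (hME : M.E = Set.Icc 1 n) (s : ℕ) :
    ((NLf n M).filter (fun a => (Clf n M a).card = s)).card
      = (((NLf n M).image (fun a => Clf n M a)).filter (fun K => K.card = s)).card * s := by
  rw [Finset.card_eq_sum_card_fiberwise
    (f := fun a => Clf n M a)
    (t := ((NLf n M).image (fun a => Clf n M a)).filter (fun K => K.card = s))
    (fun a ha => by
      have h1 := Finset.mem_filter.mp ha
      exact Finset.mem_filter.mpr ⟨Finset.mem_image_of_mem _ h1.1, h1.2⟩)]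
  have hper : ∀ K ∈ ((NLf n M).image (fun a => Clf n M a)).filter (fun K => K.card = s),
      (((NLf n M).filter (fun a => (Clf n M a).card = s)).filter
        (fun a => Clf n M a = K)).card = s := by
    intro K hK
    have h1 := Finset.mem_filter.mp hK
    obtain ⟨u, huN, huK⟩ := Finset.mem_image.mp h1.1
    have heq : ((NLf n M).filter (fun a => (Clf n M a).card = s)).filter
        (fun a => Clf n M a = K) = K := by
      ext a
      constructor
      · intro ha
        have h2 := Finset.mem_filter.mp ha
        rw [← h2.2]
        exact mem_Clf_self (Finset.mem_filter.mp h2.1).1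
      · intro ha
        rw [← huK] at ha
        have haN : a ∈ NLf n M := Clf_subset ha
        have hpar : Par M u a := (Finset.mem_filter.mp ha).2
        have hClf : Clf n M a = K := by
          rw [← huK]
          exact (Clf_eq_of_par hME huN haN hpar).symm
        refine Finset.mem_filter.mpr ⟨Finset.mem_filter.mpr ⟨haN, ?_⟩, hClf⟩
        rw [hClf]
        exact h1.2
    rw [heq]
    exact h1.2
  rw [Finset.sum_congr rfl hper, Finset.sum_const, smul_eq_mul]

theorem classes_countP_le_one (hME : M.E = Set.Icc 1 n) (x : ℕ) :
    ((NLf n M).image (fun a => Clf n M a)).val.countP (fun K => x ∈ K) ≤ 1 := by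
  rw [Multiset.countP_eq_card_filter]
  have : ((NLf n M).image (fun a => Clf n M a)).val.filter (fun K => x ∈ K)
      = (((NLf n M).image (fun a => Clf n M a)).filter (fun K => x ∈ K)).val := rfl
  rw [this]
  show (((NLf n M).image (fun a => Clf n M a)).filter (fun K => x ∈ K)).card ≤ 1
  rw [Finset.card_le_one]
  intro K hK K' hK'
  obtain ⟨u, huN, huK⟩ := Finset.mem_image.mp (Finset.mem_filter.mp hK).1
  obtain ⟨u', huN', huK'⟩ := Finset.mem_image.mp (Finset.mem_filter.mp hK').1
  have hxK : x ∈ K := (Finset.mem_filter.mp hK).2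
  have hxK' : x ∈ K' := (Finset.mem_filter.mp hK').2
  rw [← huK] at hxK
  rw [← huK'] at hxK'
  have hxN : x ∈ NLf n M := Clf_subset hxK
  have h1 : Par M u x := (Finset.mem_filter.mp hxK).2
  have h2 : Par M u' x := (Finset.mem_filter.mp hxK').2
  rw [← huK, ← huK', Clf_eq_of_par hME huN hxN h1, Clf_eq_of_par hME huN' hxN h2]

theorem classes_union (hME : M.E = Set.Icc 1 n) :
    {x : ℕ | ∃ K ∈ ((NLf n M).image (fun a => Clf n M a)).val, x ∈ K} = ↑(NLf n M) := by
  ext x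
  simp only [Set.mem_setOf_eq, Finset.mem_coe, Finset.mem_val]
  constructor
  · rintro ⟨K, hK, hxK⟩
    obtain ⟨u, _, huK⟩ := Finset.mem_image.mp hK
    rw [← huK] at hxK
    exact Clf_subset hxK
  · intro hx
    exact ⟨Clf n M x, Finset.mem_image_of_mem _ hx, mem_Clf_self hx⟩

theorem count_map_card (C : Finset (Finset ℕ)) (s : ℕ) :
    Multiset.count s (C.val.map Finset.card) = (C.filter (fun K => K.card = s)).card := by
  rw [Multiset.count_map]
  have h1 : C.val.filter (fun K => s = K.card) = C.val.filter (fun K => K.card = s) :=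
    Multiset.filter_congr (fun K _ => by constructor <;> (intro h; exact h.symm))
  rw [h1]
  rfl

theorem statement_10_aux (n : ℕ) (M N : Matroid ℕ)
    (hME : M.E = Set.Icc 1 n) (hNE : N.E = Set.Icc 1 n)
    (hMrk : RankEq M 2) (hNrk : RankEq N 2)
    (h : symInd n (basePolytope n M) = symInd n (basePolytope n N)) :
    MatroidIso M N := by
  classical
  have hn2 : 2 ≤ n := two_le_n hME hMrk
  -- Step 1: moment equalities
  have hmom : ∀ m, 1 ≤ m → m ≤ n - 1 →
      (∑ a ∈ NLf n M, ((Tf n M a).card).descFactorial m)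
        = ∑ a ∈ NLf n N, ((Tf n N a).card).descFactorial m := by
    intro m hm1 hm2
    have hmn : m + 1 ≤ n := by omega
    have h1 := count_mem_eq h (xvec n m)
    have h2 : Finset.univ.filter
        (fun σ : Equiv.Perm (Fin n) => (fun i => xvec n m (σ i)) ∈ basePolytope n M)
        = Finset.univ.filter
          (fun σ : Equiv.Perm (Fin n) => GoodT n M m (resMap hmn σ.symm)) :=
      Finset.filter_congr (fun σ _ => cond_iff_good hME hMrk hm1 hmn σ)
    have h2' : Finset.univ.filter
        (fun σ : Equiv.Perm (Fin n) => (fun i => xvec n m (σ i)) ∈ basePolytope n N)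
        = Finset.univ.filter
          (fun σ : Equiv.Perm (Fin n) => GoodT n N m (resMap hmn σ.symm)) :=
      Finset.filter_congr (fun σ _ => cond_iff_good hNE hNrk hm1 hmn σ)
    rw [h2, h2'] at h1
    rw [card_inv_eq (fun τ => GoodT n M m (resMap hmn τ)),
        card_inv_eq (fun τ => GoodT n N m (resMap hmn τ))] at h1
    obtain ⟨c, hcpos, hcform⟩ := good_count (n := n) (m := m) hmn
    rw [hcform M, hcform N] at h1
    have h3 := Nat.eq_of_mul_eq_mul_right hcpos h1
    rw [Vcard hmn, Vcard hmn] at h3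
    exact h3
  -- Step 2: multiset of Tf-cards equal
  have hμeq : (NLf n M).val.map (fun a => (Tf n M a).card)
      = (NLf n N).val.map (fun a => (Tf n N a).card) := by
    apply multiset_eq_of_desc_sums (n - 1)
    · intro q hq
      obtain ⟨a, ha, rfl⟩ := Multiset.mem_map.mp hq
      have haN : a ∈ NLf n M := ha
      exact ⟨Tf_card_pos hME hMrk haN, Tf_card_le haN⟩
    · intro q hq
      obtain ⟨a, ha, rfl⟩ := Multiset.mem_map.mp hq
      have haN : a ∈ NLf n N := ha
      exact ⟨Tf_card_pos hNE hNrk haN, Tf_card_le haN⟩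
    · intro m hm1 hm2
      have hs1 : (((NLf n M).val.map (fun a => (Tf n M a).card)).map
          (fun q => q.descFactorial m)).sum
          = ∑ a ∈ NLf n M, ((Tf n M a).card).descFactorial m := by
        rw [Multiset.map_map]
        rfl
      have hs2 : (((NLf n N).val.map (fun a => (Tf n N a).card)).map
          (fun q => q.descFactorial m)).sum
          = ∑ a ∈ NLf n N, ((Tf n N a).card).descFactorial m := by
        rw [Multiset.map_map]
        rfl
      rw [hs1, hs2]
      exact hmom m hm1 hm2
  have he1 : (NLf n M).card = (NLf n N).card := by
    have hc := congrArg Multiset.card hμeq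
    rw [Multiset.card_map, Multiset.card_map] at hc
    exact hc
  -- Step 3: multiset of class-cards (with multiplicity) equal
  have hνeq : (NLf n M).val.map (fun a => (Clf n M a).card)
      = (NLf n N).val.map (fun a => (Clf n N a).card) := by
    have hM2 : (NLf n M).val.map (fun a => (Clf n M a).card)
        = ((NLf n M).val.map (fun a => (Tf n M a).card)).map
            (fun q => (NLf n M).card - q) := by
      rw [Multiset.map_map]
      apply Multiset.map_congr rfl
      intro a _
      have := Clf_card_add_Tf_card (n := n) (M := M) a
      simp only [Function.comp_apply]
      omega
    have hN2 : (NLf n N).val.map (fun a => (Clf n N a).card)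
        = ((NLf n N).val.map (fun a => (Tf n N a).card)).map
            (fun q => (NLf n N).card - q) := by
      rw [Multiset.map_map]
      apply Multiset.map_congr rfl
      intro a _
      have := Clf_card_add_Tf_card (n := n) (M := N) a
      simp only [Function.comp_apply]
      omega
    rw [hM2, hN2, hμeq, he1]
  -- Step 4: class-size multiset equality
  have hclasscard : ((NLf n M).image (fun a => Clf n M a)).val.map Finset.card
      = ((NLf n N).image (fun a => Clf n N a)).val.map Finset.card := by
    rw [Multiset.ext]
    intro s
    rw [count_map_card, count_map_card]
    rcases Nat.eq_zero_or_pos s with rfl | hs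
    · have hz : ∀ (P : Matroid ℕ),
          (((NLf n P).image (fun a => Clf n P a)).filter (fun K => K.card = 0)).card = 0 := by
        intro P
        rw [Finset.card_eq_zero]
        apply Finset.filter_false_of_mem
        intro K hK
        obtain ⟨u, huN, huK⟩ := Finset.mem_image.mp hK
        intro hc0
        rw [← huK, Finset.card_eq_zero] at hc0
        have := mem_Clf_self huN
        rw [hc0] at this
        exact absurd this (Finset.notMem_empty u)
      rw [hz M, hz N]
    · apply Nat.eq_of_mul_eq_mul_right hs
      have hcM := class_partition_count hME s
      have hcN := class_partition_count hNE s
      have hcountM : ((NLf n M).filter (fun a => (Clf n M a).card = s)).card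
          = Multiset.count s ((NLf n M).val.map (fun a => (Clf n M a).card)) := by
        rw [Multiset.count_map]
        have h1 : (NLf n M).val.filter (fun a => s = (Clf n M a).card)
            = (NLf n M).val.filter (fun a => (Clf n M a).card = s) :=
          Multiset.filter_congr (fun K _ => by constructor <;> (intro hh; exact hh.symm))
        rw [h1]
        rfl
      have hcountN : ((NLf n N).filter (fun a => (Clf n N a).card = s)).card
          = Multiset.count s ((NLf n N).val.map (fun a => (Clf n N a).card)) := by
        rw [Multiset.count_map]
        have h1 : (NLf n N).val.filter (fun a => s = (Clf n N a).card)
            = (NLf n N).val.filter (fun a => (Clf n N a).card = s) :=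
          Multiset.filter_congr (fun K _ => by constructor <;> (intro hh; exact hh.symm))
        rw [h1]
        rfl
      calc (((NLf n M).image (fun a => Clf n M a)).filter (fun K => K.card = s)).card * s
          = ((NLf n M).filter (fun a => (Clf n M a).card = s)).card := hcM.symm
        _ = Multiset.count s ((NLf n M).val.map (fun a => (Clf n M a).card)) := hcountM
        _ = Multiset.count s ((NLf n N).val.map (fun a => (Clf n N a).card)) := by rw [hνeq]
        _ = ((NLf n N).filter (fun a => (Clf n N a).card = s)).card := hcountN.symm
        _ = (((NLf n N).image (fun a => Clf n N a)).filter (fun K => K.card = s)).card * s :=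
          hcN
  -- Step 5: glue the class bijections
  have hrel : Multiset.Rel (fun K L => K.card = L.card)
      ((NLf n M).image (fun a => Clf n M a)).val
      ((NLf n N).image (fun a => Clf n N a)).val :=
    Multiset.rel_map.mp (Multiset.rel_eq.mpr hclasscard)
  obtain ⟨f, hfbij, hfimg⟩ := glue hrel (classes_countP_le_one hME) (classes_countP_le_one hNE)
  rw [classes_union hME, classes_union hNE] at hfbij
  have hClfmap : ∀ a ∈ NLf n M, f '' ↑(Clf n M a) = ↑(Clf n N (f a)) := by
    intro a haN
    obtain ⟨L, hL, himg⟩ := hfimg (Clf n M a)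
      (Finset.mem_val.mpr (Finset.mem_image_of_mem _ haN))
    obtain ⟨u', huN', huL⟩ := Finset.mem_image.mp (Finset.mem_val.mp hL)
    have hfaL : f a ∈ L := by
      have : f a ∈ f '' ↑(Clf n M a) := ⟨a, Finset.mem_coe.mpr (mem_Clf_self haN), rfl⟩
      rw [himg] at this
      exact Finset.mem_coe.mp this
    have hfaN : f a ∈ NLf n N := Finset.mem_coe.mp (hfbij.mapsTo (Finset.mem_coe.mpr haN))
    rw [← huL] at hfaL
    have hpar : Par N u' (f a) := (Finset.mem_filter.mp hfaL).2
    rw [himg, ← huL, Clf_eq_of_par hNE huN' hfaN hpar]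
  have hparpres : ∀ a b, a ∈ NLf n M → b ∈ NLf n M → (Par M a b ↔ Par N (f a) (f b)) := by
    intro a b haN hbN
    constructor
    · intro hpab
      have hbC : b ∈ Clf n M a := Finset.mem_filter.mpr ⟨hbN, hpab⟩
      have hfbC : f b ∈ (↑(Clf n N (f a)) : Set ℕ) := by
        rw [← hClfmap a haN]
        exact ⟨b, Finset.mem_coe.mpr hbC, rfl⟩
      exact (Finset.mem_filter.mp (Finset.mem_coe.mp hfbC)).2
    · intro hpab
      have hfbN : f b ∈ NLf n N := Finset.mem_coe.mp (hfbij.mapsTo (Finset.mem_coe.mpr hbN))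
      have hfbC : f b ∈ (↑(Clf n N (f a)) : Set ℕ) :=
        Finset.mem_coe.mpr (Finset.mem_filter.mpr ⟨hfbN, hpab⟩)
      rw [← hClfmap a haN] at hfbC
      obtain ⟨b', hb'C, hfb'⟩ := hfbC
      have hb'N : b' ∈ NLf n M := Clf_subset (Finset.mem_coe.mp hb'C)
      have hbb : b' = b :=
        hfbij.injOn (Finset.mem_coe.mpr hb'N) (Finset.mem_coe.mpr hbN) hfb'
      rw [← hbb]
      exact (Finset.mem_filter.mp (Finset.mem_coe.mp hb'C)).2
  -- Step 6: loops bijection and global map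
  have hLcard : (Finset.Icc 1 n \ NLf n M).card = (Finset.Icc 1 n \ NLf n N).card := by
    rw [Finset.card_sdiff_of_subset NLf_subset_Icc, Finset.card_sdiff_of_subset NLf_subset_Icc, he1]
  have hgbij : Set.BijOn (finsetBij hLcard) ↑(Finset.Icc 1 n \ NLf n M)
      ↑(Finset.Icc 1 n \ NLf n N) := finsetBij_bijOn hLcard
  set g := finsetBij hLcard with hg
  set F : ℕ → ℕ := fun x => if x ∈ NLf n M then f x else g x with hF
  have hFonNL : Set.EqOn f F ↑(NLf n M) := fun x hx => by
    simp only [hF, if_pos (Finset.mem_coe.mp hx)]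
  have hFonL : Set.EqOn g F ↑(Finset.Icc 1 n \ NLf n M) := fun x hx => by
    have hx' : x ∉ NLf n M := (Finset.mem_sdiff.mp (Finset.mem_coe.mp hx)).2
    simp only [hF, if_neg hx']
  have hFbij1 : Set.BijOn F ↑(NLf n M) ↑(NLf n N) := hfbij.congr hFonNL
  have hFbij2 : Set.BijOn F ↑(Finset.Icc 1 n \ NLf n M) ↑(Finset.Icc 1 n \ NLf n N) :=
    hgbij.congr hFonL
  have hsplit : ∀ (P : Matroid ℕ), (Set.Icc 1 n : Set ℕ)
      = ↑(NLf n P) ∪ ↑(Finset.Icc 1 n \ NLf n P) := by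
    intro P
    ext x
    simp only [Set.mem_union, Finset.coe_sdiff, Set.mem_diff, Finset.mem_coe,
      ← Finset.coe_Icc, Finset.mem_coe]
    constructor
    · intro hx
      by_cases hxN : x ∈ NLf n P
      · exact Or.inl hxN
      · exact Or.inr ⟨hx, hxN⟩
    · rintro (hx | ⟨hx, _⟩)
      · exact NLf_subset_Icc hx
      · exact hx
  have hFbij : Set.BijOn F (Set.Icc 1 n) (Set.Icc 1 n) := by
    have hinjU : Set.InjOn F (↑(NLf n M) ∪ ↑(Finset.Icc 1 n \ NLf n M)) := by
      intro x hx y hy hxy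
      rcases hx with hx | hx
      · rcases hy with hy | hy
        · exact hFbij1.injOn hx hy hxy
        · exfalso
          have h1 : F x ∈ ↑(NLf n N) := hFbij1.mapsTo hx
          have h2 : F y ∈ ↑(Finset.Icc 1 n \ NLf n N) := hFbij2.mapsTo hy
          rw [hxy] at h1
          exact (Finset.mem_sdiff.mp (Finset.mem_coe.mp h2)).2 (Finset.mem_coe.mp h1)
      · rcases hy with hy | hy
        · exfalso
          have h1 : F y ∈ ↑(NLf n N) := hFbij1.mapsTo hy
          have h2 : F x ∈ ↑(Finset.Icc 1 n \ NLf n N) := hFbij2.mapsTo hx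
          rw [← hxy] at h1
          exact (Finset.mem_sdiff.mp (Finset.mem_coe.mp h2)).2 (Finset.mem_coe.mp h1)
        · exact hFbij2.injOn hx hy hxy
    have hU := hFbij1.union hFbij2 hinjU
    rw [← hsplit M, ← hsplit N] at hU
    exact hU
  refine ⟨F, ?_, ?_⟩
  · rw [hME, hNE]
    exact hFbij
  · intro B hBE
    have hBIcc : B ⊆ Set.Icc 1 n := hME ▸ hBE
    constructor
    · intro hB
      obtain ⟨a, b, haN, hbT, rfl⟩ := (base_iff_pair hME hMrk).mp hB
      have hbN : b ∈ NLf n M := Tf_subset hbT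
      have hnp : ¬ Par M a b := (Finset.mem_filter.mp hbT).2
      rw [Set.image_pair, base_iff_pair hNE hNrk]
      refine ⟨F a, F b, ?_, ?_, rfl⟩
      · exact Finset.mem_coe.mp (hFbij1.mapsTo (Finset.mem_coe.mpr haN))
      · refine Finset.mem_filter.mpr
          ⟨Finset.mem_coe.mp (hFbij1.mapsTo (Finset.mem_coe.mpr hbN)), ?_⟩
        intro hp
        apply hnp
        rw [← hFonNL (Finset.mem_coe.mpr haN), ← hFonNL (Finset.mem_coe.mpr hbN)] at hp
        exact (hparpres a b haN hbN).mpr hp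
    · intro hB'
      obtain ⟨u, v, huN, hvT, huv⟩ := (base_iff_pair hNE hNrk).mp hB'
      have hvN : v ∈ NLf n N := Tf_subset hvT
      have hnpuv : ¬ Par N u v := (Finset.mem_filter.mp hvT).2
      have huvne : u ≠ v := fun hh => hnpuv (Or.inr hh)
      have hu : u ∈ F '' B := by rw [huv]; exact Set.mem_insert u {v}
      have hv : v ∈ F '' B := by rw [huv]; exact Set.mem_insert_iff.mpr (Or.inr rfl)
      obtain ⟨a, haB, hFa⟩ := hu
      obtain ⟨b, hbB, hFb⟩ := hv
      have hab : a ≠ b := fun hh => huvne (by rw [← hFa, ← hFb, hh])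
      have hBab : B = {a, b} := by
        apply Set.Subset.antisymm
        · intro x hxB
          have hx : F x ∈ ({u, v} : Set ℕ) := by
            rw [← huv]
            exact ⟨x, hxB, rfl⟩
          rcases hx with hx | hx
          · left
            exact hFbij.injOn (hBIcc hxB) (hBIcc haB) (by rw [hx, hFa])
          · right
            simp only [Set.mem_singleton_iff] at hx ⊢
            exact hFbij.injOn (hBIcc hxB) (hBIcc hbB) (by rw [hx, hFb])
        · rintro x (rfl | hx)
          · exact haB
          · simp only [Set.mem_singleton_iff] at hx
            rw [hx]
            exact hbB
      have haN : a ∈ NLf n M := by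
        by_contra haL
        have haIcc : a ∈ Finset.Icc 1 n := by
          rw [← Finset.coe_Icc] at hBIcc
          exact Finset.mem_coe.mp (hBIcc haB)
        have haLM : a ∈ ↑(Finset.Icc 1 n \ NLf n M) :=
          Finset.mem_coe.mpr (Finset.mem_sdiff.mpr ⟨haIcc, haL⟩)
        have h1 : F a ∈ ↑(Finset.Icc 1 n \ NLf n N) := hFbij2.mapsTo haLM
        rw [hFa] at h1
        exact (Finset.mem_sdiff.mp (Finset.mem_coe.mp h1)).2 huN
      have hbN : b ∈ NLf n M := by
        by_contra hbL
        have hbIcc : b ∈ Finset.Icc 1 n := by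
          rw [← Finset.coe_Icc] at hBIcc
          exact Finset.mem_coe.mp (hBIcc hbB)
        have hbLM : b ∈ ↑(Finset.Icc 1 n \ NLf n M) :=
          Finset.mem_coe.mpr (Finset.mem_sdiff.mpr ⟨hbIcc, hbL⟩)
        have h1 : F b ∈ ↑(Finset.Icc 1 n \ NLf n N) := hFbij2.mapsTo hbLM
        rw [hFb] at h1
        exact (Finset.mem_sdiff.mp (Finset.mem_coe.mp h1)).2 hvN
      have hnp : ¬ Par M a b := by
        intro hp
        apply hnpuv
        have := (hparpres a b haN hbN).mp hp
        rw [hFonNL (Finset.mem_coe.mpr haN), hFonNL (Finset.mem_coe.mpr hbN), hFa, hFb] at this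
        exact this
      rw [hBab]
      exact (base_iff_pair hME hMrk).mpr ⟨a, b, haN, Finset.mem_filter.mpr ⟨hbN, hnp⟩, rfl⟩

end SMain

/-- rank-2 matroids on `{1,…,n}` whose base polytopes have equal
symmetrized indicator functions are isomorphic. -/
theorem statement_10 (n : ℕ) (M N : Matroid ℕ)
    (hME : M.E = Set.Icc 1 n) (hNE : N.E = Set.Icc 1 n)
    (hMrk : RankEq M 2) (hNrk : RankEq N 2)
    (h : symInd n (basePolytope n M) = symInd n (basePolytope n N)) :
    MatroidIso M N :=
  statement_10_aux n M N hME hNE hMrk hNrk h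

end PaperPOAM
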